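/- In the category ⟨four-block⟩ of all noncrossing partitions with blocks of even size (corresponding to H_N^+), two projective partitions p and q are equivalent if and only if w(p) = w(q), where w(p) is the word over ℤ/2 obtained by assigning to each through-block of p (read left to right) the value 0 if its size is divisible by 4 and 1 otherwise. -/

import Mathlib

/-- A two-row partition with `k` upper and `l` lower points, encoded as the
equivalence relation whose classes are the blocks. -/
abbrev PP (k l : ℕ) := Setoid (Fin k ⊕ Fin l)

/-- The involution `p*` (turning `p` upside down). -/
def swapP {k l : ℕ} (p : PP k l) : PP l k := Setoid.comap Sum.swap p

/-- Disjoint union of two setoids. -/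
def sumSetoid {α β : Type*} (s : Setoid α) (t : Setoid β) : Setoid (α ⊕ β) where
  r := Sum.LiftRel s.r t.r
  iseqv := by
    refine ⟨fun x => ?_, fun {x y} h => ?_, fun {x y z} h1 h2 => ?_⟩
    · cases x with
      | inl a => exact Sum.LiftRel.inl (s.iseqv.refl a)
      | inr b => exact Sum.LiftRel.inr (t.iseqv.refl b)
    · cases h with
      | inl h => exact Sum.LiftRel.inl (s.iseqv.symm h)
      | inr h => exact Sum.LiftRel.inr (t.iseqv.symm h)
    · cases h1 with
      | inl h1 =>
        cases h2 with
        | inl h2 => exact Sum.LiftRel.inl (s.iseqv.trans h1 h2)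
      | inr h1 =>
        cases h2 with
        | inr h2 => exact Sum.LiftRel.inr (t.iseqv.trans h1 h2)

/-- Reindexing equivalence for the horizontal concatenation (tensor product). -/
def tensorEquiv (k l k' l' : ℕ) :
    (Fin (k + k') ⊕ Fin (l + l')) ≃ ((Fin k ⊕ Fin l) ⊕ (Fin k' ⊕ Fin l')) :=
  (Equiv.sumCongr finSumFinEquiv.symm finSumFinEquiv.symm).trans
    (Equiv.sumSumSumComm (Fin k) (Fin k') (Fin l) (Fin l'))

/-- Tensor product (horizontal concatenation) of partitions. -/
def tensorP {k l k' l' : ℕ} (p : PP k l) (q : PP k' l') : PP (k + k') (l + l') :=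
  Setoid.comap (tensorEquiv k l k' l') (sumSetoid p q)

/-- The relation on `k ⊔ l ⊔ m` points generated by `p` (upper part) and `q` (lower part). -/
def midRel {k l m : ℕ} (p : PP k l) (q : PP l m) :
    (Fin k ⊕ (Fin l ⊕ Fin m)) → (Fin k ⊕ (Fin l ⊕ Fin m)) → Prop := fun x y =>
  (∃ a b : Fin k ⊕ Fin l, p.r a b ∧ x = Sum.map id Sum.inl a ∧ y = Sum.map id Sum.inl b) ∨
  (∃ a b : Fin l ⊕ Fin m, q.r a b ∧ x = Sum.inr a ∧ y = Sum.inr b)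

/-- The equivalence relation generated on `k ⊔ l ⊔ m` in the composition procedure. -/
def bigS {k l m : ℕ} (p : PP k l) (q : PP l m) : Setoid (Fin k ⊕ (Fin l ⊕ Fin m)) :=
  Relation.EqvGen.setoid (midRel p q)

/-- `compP q p` is the vertical composition `qp` (apply `p : P(k,l)` first, then `q : P(l,m)`). -/
def compP {k l m : ℕ} (q : PP l m) (p : PP k l) : PP k m :=
  Setoid.comap (Sum.map id Sum.inr) (bigS p q)

/-- `rlP q p` : the number of closed loops removed in the composition `qp`,
i.e. the blocks of the generated relation consisting only of middle points. -/
noncomputable def rlP {k l m : ℕ} (q : PP l m) (p : PP k l) : ℕ :=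
  Nat.card {c : Quotient (bigS p q) //
    ∀ x, Quotient.mk (bigS p q) x = c → ∃ b : Fin l, x = Sum.inr (Sum.inl b)}

/-- `b(p)` : number of blocks. -/
noncomputable def bP {k l : ℕ} (p : PP k l) : ℕ := Nat.card (Quotient p)

/-- `t(p)` : number of through-blocks (blocks meeting both rows). -/
noncomputable def tP {k l : ℕ} (p : PP k l) : ℕ :=
  Nat.card {c : Quotient p // (∃ a : Fin k, Quotient.mk p (Sum.inl a) = c) ∧
    (∃ b : Fin l, Quotient.mk p (Sum.inr b) = c)}

/-- `β(p) = b(p) - t(p)` : number of non-through-blocks. -/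
noncomputable def betaP {k l : ℕ} (p : PP k l) : ℕ := bP p - tP p

/-- The identity partition `|^{⊗k}`. -/
def idP (k : ℕ) : PP k k := Setoid.ker (Sum.elim (fun i : Fin k => i) (fun i : Fin k => i))

/-- A pair partition: all blocks have size two. -/
def isPair {k l : ℕ} (p : PP k l) : Prop := ∀ x, Nat.card {y // p.r x y} = 2

/-- A through-partition: a pair partition each of whose blocks connects exactly one
upper point to exactly one lower point. -/
def isThrough {k : ℕ} (p : PP k k) : Prop :=
  isPair p ∧ (∀ a b : Fin k, p.r (Sum.inl a) (Sum.inl b) → a = b) ∧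
    (∀ a b : Fin k, p.r (Sum.inr a) (Sum.inr b) → a = b)

/-- A building partition. -/
def isBuilding {k l : ℕ} (p : PP k l) : Prop :=
  (∀ b b' : Fin l, p.r (Sum.inr b) (Sum.inr b') → b = b') ∧
  (∀ b : Fin l, ∃ a : Fin k, p.r (Sum.inl a) (Sum.inr b)) ∧
  (∀ b b' : Fin l, ∀ a a' : Fin k, b < b' →
    IsLeast {x : Fin k | p.r (Sum.inl x) (Sum.inr b)} a →
    IsLeast {x : Fin k | p.r (Sum.inl x) (Sum.inr b')} a' → a < a')

/-- A projective partition: symmetric and idempotent. -/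
def isProjective {k : ℕ} (p : PP k k) : Prop := swapP p = p ∧ compP p p = p

/-- Linear position of the points, reading the upper row left to right and then the
lower row right to left. -/
def posP (k l : ℕ) : Fin k ⊕ Fin l → ℕ :=
  Sum.elim (fun i => (i : ℕ)) (fun j => k + (l - 1 - (j : ℕ)))

/-- Noncrossing partitions. -/
def isNC {k l : ℕ} (p : PP k l) : Prop :=
  ¬ ∃ x1 x2 x3 x4 : Fin k ⊕ Fin l,
    posP k l x1 < posP k l x2 ∧ posP k l x2 < posP k l x3 ∧ posP k l x3 < posP k l x4 ∧
    p.r x1 x3 ∧ p.r x2 x4 ∧ ¬ p.r x1 x2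

/-- Membership in the category `⟨⊞⟩` corresponding to `H_N^+` : noncrossing partitions
in which every block has even size. -/
def isEvenNC {k l : ℕ} (p : PP k l) : Prop :=
  isNC p ∧ ∀ x, Even (Nat.card {y // p.r x y})

section Part1

open Sum

variable {k l m : ℕ}

lemma swapP_swapP (p : PP k l) : swapP (swapP p) = p := by
  apply Setoid.ext
  intro x y
  cases x <;> cases y <;> exact Iff.rfl

/-- Explicit description of the relation generated in the composition
`(swapP t) ∘ s` on the three rows. -/
def Rel3 (s : PP k m) (t : PP l m) :
    (Fin k ⊕ (Fin m ⊕ Fin l)) → (Fin k ⊕ (Fin m ⊕ Fin l)) → Prop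
  | .inl a, .inl a' => s.r (.inl a) (.inl a')
  | .inl a, .inr (.inl c) => s.r (.inl a) (.inr c)
  | .inl a, .inr (.inr b) => ∃ c, s.r (.inl a) (.inr c) ∧ t.r (.inl b) (.inr c)
  | .inr (.inl c), .inl a => s.r (.inl a) (.inr c)
  | .inr (.inl c), .inr (.inl c') => s.r (.inr c) (.inr c')
  | .inr (.inl c), .inr (.inr b) => t.r (.inl b) (.inr c)
  | .inr (.inr b), .inl a => ∃ c, s.r (.inl a) (.inr c) ∧ t.r (.inl b) (.inr c)
  | .inr (.inr b), .inr (.inl c) => t.r (.inl b) (.inr c)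
  | .inr (.inr b), .inr (.inr b') => t.r (.inl b) (.inl b')

variable {s : PP k m} {t : PP l m}

lemma rel3_refl (x) : Rel3 s t x x := by
  rcases x with a | (c | b)
  · exact s.iseqv.refl _
  · exact s.iseqv.refl _
  · exact t.iseqv.refl _

lemma rel3_symm {x y} (h : Rel3 s t x y) : Rel3 s t y x := by
  rcases x with a | (c | b) <;> rcases y with a' | (c' | b')
  · exact s.iseqv.symm h
  · exact h
  · exact h
  · exact h
  · exact s.iseqv.symm h
  · exact h
  · exact h
  · exact h
  · exact t.iseqv.symm h

lemma rel3_trans (hE : ∀ c c', s.r (.inr c) (.inr c') ↔ t.r (.inr c) (.inr c'))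
    {x y z} (h1 : Rel3 s t x y) (h2 : Rel3 s t y z) : Rel3 s t x z := by
  rcases x with a | (c | b) <;> rcases y with a' | (c' | b') <;>
    rcases z with a'' | (c'' | b'')
  · exact s.iseqv.trans h1 h2
  · exact s.iseqv.trans h1 h2
  · obtain ⟨c, hc1, hc2⟩ := h2; exact ⟨c, s.iseqv.trans h1 hc1, hc2⟩
  · exact s.iseqv.trans h1 (s.iseqv.symm h2)
  · exact s.iseqv.trans h1 h2
  · exact ⟨c', h1, h2⟩
  · obtain ⟨c, hc1, hc2⟩ := h1; obtain ⟨c2, hc1', hc2'⟩ := h2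
    exact s.iseqv.trans hc1 (s.iseqv.trans
      ((hE _ _).mpr (t.iseqv.trans (t.iseqv.symm hc2) hc2')) (s.iseqv.symm hc1'))
  · obtain ⟨c, hc1, hc2⟩ := h1
    exact s.iseqv.trans hc1 ((hE _ _).mpr (t.iseqv.trans (t.iseqv.symm hc2) h2))
  · obtain ⟨c, hc1, hc2⟩ := h1; exact ⟨c, hc1, t.iseqv.trans (t.iseqv.symm h2) hc2⟩
  · exact s.iseqv.trans (s.iseqv.symm h2) h1
  · exact s.iseqv.trans (s.iseqv.symm h1) h2
  · obtain ⟨c2, hc1, hc2⟩ := h2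
    exact t.iseqv.trans hc2 ((hE _ _).mp (s.iseqv.trans (s.iseqv.symm hc1) h1))
  · exact s.iseqv.trans h2 (s.iseqv.symm h1)
  · exact s.iseqv.trans h1 h2
  · exact t.iseqv.trans h2 ((hE _ _).mp (s.iseqv.symm h1))
  · obtain ⟨c2, hc1, hc2⟩ := h2
    exact s.iseqv.trans hc1 ((hE _ _).mpr (t.iseqv.trans (t.iseqv.symm hc2) h1))
  · exact (hE _ _).mpr (t.iseqv.trans (t.iseqv.symm h1) h2)
  · exact t.iseqv.trans (t.iseqv.symm h2) h1
  · obtain ⟨c, hc1, hc2⟩ := h1; exact ⟨c, s.iseqv.trans (s.iseqv.symm h2) hc1, hc2⟩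
  · obtain ⟨c, hc1, hc2⟩ := h1
    exact t.iseqv.trans hc2 ((hE _ _).mp (s.iseqv.trans (s.iseqv.symm hc1) h2))
  · obtain ⟨c, hc1, hc2⟩ := h1; obtain ⟨c2, hc1', hc2'⟩ := h2
    exact t.iseqv.trans hc2 (t.iseqv.trans
      ((hE _ _).mp (s.iseqv.trans (s.iseqv.symm hc1) hc1')) (t.iseqv.symm hc2'))
  · exact ⟨c', h2, h1⟩
  · exact t.iseqv.trans h1 ((hE _ _).mp h2)
  · exact t.iseqv.trans h1 (t.iseqv.symm h2)
  · obtain ⟨c, hc1, hc2⟩ := h2; exact ⟨c, hc1, t.iseqv.trans h1 hc2⟩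
  · exact t.iseqv.trans h1 h2
  · exact t.iseqv.trans h1 h2

lemma midRel_sub_rel3 (hE : ∀ c c', s.r (.inr c) (.inr c') ↔ t.r (.inr c) (.inr c'))
    (x y) (h : midRel s (swapP t) x y) : Rel3 s t x y := by
  rcases h with ⟨a, b, hab, rfl, rfl⟩ | ⟨a, b, hab, rfl, rfl⟩
  · rcases a with a | c <;> rcases b with a' | c'
    · exact hab
    · exact hab
    · exact s.iseqv.symm hab
    · exact hab
  · rcases a with c | bb <;> rcases b with c' | bb'
    · exact (hE _ _).mpr hab
    · exact t.iseqv.symm hab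
    · exact hab
    · exact hab


theorem bigS_char (hE : ∀ c c', s.r (.inr c) (.inr c') ↔ t.r (.inr c) (.inr c'))
    (x y) : (bigS s (swapP t)).r x y ↔ Rel3 s t x y := by
  constructor
  · intro h
    induction h with
    | rel x y h => exact midRel_sub_rel3 hE x y h
    | refl x => exact rel3_refl x
    | symm x y _ ih => exact rel3_symm ih
    | trans x y z _ _ ih1 ih2 => exact rel3_trans hE ih1 ih2
  · intro h
    have base1 : ∀ u v : Fin k ⊕ Fin m, s.r u v →
        (bigS s (swapP t)).r (Sum.map id Sum.inl u) (Sum.map id Sum.inl v) := by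
      intro u v huv
      exact Relation.EqvGen.rel _ _ (Or.inl ⟨u, v, huv, rfl, rfl⟩)
    have base2 : ∀ u v : Fin m ⊕ Fin l, (swapP t).r u v →
        (bigS s (swapP t)).r (Sum.inr u) (Sum.inr v) := by
      intro u v huv
      exact Relation.EqvGen.rel _ _ (Or.inr ⟨u, v, huv, rfl, rfl⟩)
    rcases x with a | (c | b) <;> rcases y with a' | (c' | b')
    · exact base1 (.inl a) (.inl a') h
    · exact base1 (.inl a) (.inr c') h
    · obtain ⟨c, hc1, hc2⟩ := h
      exact Relation.EqvGen.trans _ _ _ (base1 (.inl a) (.inr c) hc1)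
        (base2 (.inl c) (.inr b') (t.iseqv.symm hc2))
    · exact Relation.EqvGen.symm _ _ (base1 (.inl a') (.inr c) h)
    · exact base1 (.inr c) (.inr c') h
    · exact base2 (.inl c) (.inr b') (t.iseqv.symm h)
    · obtain ⟨c, hc1, hc2⟩ := h
      exact Relation.EqvGen.trans _ _ _
        (Relation.EqvGen.symm _ _ (base2 (.inl c) (.inr b) (t.iseqv.symm hc2)))
        (Relation.EqvGen.symm _ _ (base1 (.inl a') (.inr c) hc1))
    · exact Relation.EqvGen.symm _ _ (base2 (.inl c') (.inr b) (t.iseqv.symm h))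
    · exact base2 (.inr b) (.inr b') h

theorem comp_ul (hE : ∀ c c', s.r (.inr c) (.inr c') ↔ t.r (.inr c) (.inr c'))
    (a a' : Fin k) :
    (compP (swapP t) s).r (.inl a) (.inl a') ↔ s.r (.inl a) (.inl a') :=
  bigS_char hE (.inl a) (.inl a')

theorem comp_cross (hE : ∀ c c', s.r (.inr c) (.inr c') ↔ t.r (.inr c) (.inr c'))
    (a : Fin k) (b : Fin l) :
    (compP (swapP t) s).r (.inl a) (.inr b) ↔
      ∃ c, s.r (.inl a) (.inr c) ∧ t.r (.inl b) (.inr c) :=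
  bigS_char hE (.inl a) (.inr (.inr b))

theorem comp_ll (hE : ∀ c c', s.r (.inr c) (.inr c') ↔ t.r (.inr c) (.inr c'))
    (b b' : Fin l) :
    (compP (swapP t) s).r (.inr b) (.inr b') ↔ t.r (.inl b) (.inl b') :=
  bigS_char hE (.inr (.inr b)) (.inr (.inr b'))

end Part1

section Part2

open Sum

variable {k l m n : ℕ}

lemma card_flip (P : PP k l) (x : Fin k ⊕ Fin l) :
    Nat.card {y // P.r y x} = Nat.card {y // P.r x y} :=
  Nat.card_congr (Equiv.subtypeEquivRight fun _ => ⟨P.iseqv.symm, P.iseqv.symm⟩)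

lemma card_split (P : PP k l) (x : Fin k ⊕ Fin l) :
    Nat.card {y // P.r x y} =
      Nat.card {a : Fin k // P.r x (.inl a)} + Nat.card {b : Fin l // P.r x (.inr b)} := by
  rw [Nat.card_congr (Equiv.subtypeSum (p := fun y => P.r x y)), Nat.card_sum]

lemma exists_least {S : Set (Fin n)} (h : S.Nonempty) : ∃ a, IsLeast S a := by
  classical
  obtain ⟨a, haS, ha⟩ := Set.Finite.exists_minimalFor id S (Set.toFinite S) h
  refine ⟨a, haS, fun b hb => ?_⟩
  by_contra hba
  push_neg at hba
  exact absurd (ha hb hba.le) (not_le.mpr hba)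

lemma sep {P : PP n n} (hnc : isNC P) {a1 a2 a' : Fin n}
    (h13 : P.r (.inl a1) (.inl a2)) (hthr : P.r (.inl a') (.inr a'))
    (hn : ¬ P.r (.inl a1) (.inl a')) (o1 : a1 < a') (o2 : a' < a2) : False := by
  refine hnc ⟨.inl a1, .inl a', .inl a2, .inr a', ?_, ?_, ?_, h13, hthr, hn⟩
  · exact o1
  · exact o2
  · show (a2 : ℕ) < n + (n - 1 - (a' : ℕ))
    have := a2.isLt
    omega

lemma building_lt {u : PP k m} (hu : isBuilding u)
    (hnc : isNC (compP (swapP u) u)) {i j : Fin m} (hij : i < j) {a a' : Fin k}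
    (ha : u.r (.inl a) (.inr i)) (ha' : u.r (.inl a') (.inr j)) : a < a' := by
  have hE : ∀ c c', u.r (.inr c) (.inr c') ↔ u.r (.inr c) (.inr c') := fun _ _ => Iff.rfl
  obtain ⟨mi, hmi⟩ := exists_least (S := {x | u.r (.inl x) (.inr i)}) ⟨a, ha⟩
  obtain ⟨mj, hmj⟩ := exists_least (S := {x | u.r (.inl x) (.inr j)}) ⟨a', ha'⟩
  have hmm : mi < mj := hu.2.2 i j mi mj hij hmi hmj
  by_contra hle
  push_neg at hle
  have hne : a' ≠ a := by
    rintro rfl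
    exact absurd (hu.1 i j (u.iseqv.trans (u.iseqv.symm ha) ha')) hij.ne
  have ha'a : a' < a := lt_of_le_of_ne hle hne
  refine sep hnc (a1 := mi) (a2 := a) (a' := mj) ?_ ?_ ?_ hmm
      (lt_of_le_of_lt (hmj.2 ha') ha'a)
  · exact (comp_ul hE mi a).mpr (u.iseqv.trans hmi.1 (u.iseqv.symm ha))
  · exact (comp_cross hE mj mj).mpr ⟨j, hmj.1, hmj.1⟩
  · intro hcon
    have : u.r (.inr i) (.inr j) :=
      u.iseqv.trans (u.iseqv.trans (u.iseqv.symm hmi.1) ((comp_ul hE mi mj).mp hcon)) hmj.1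
    exact absurd (hu.1 i j this) hij.ne

lemma building_index_lt {u : PP k m} (hu : isBuilding u)
    (hnc : isNC (compP (swapP u) u)) {i j : Fin m} {a a' : Fin k}
    (ha : u.r (.inl a) (.inr i)) (ha' : u.r (.inl a') (.inr j))
    (hij : i ≠ j) (haa : a < a') : i < j := by
  rcases lt_trichotomy i j with h | h | h
  · exact h
  · exact absurd h hij
  · exact absurd (building_lt hu hnc h ha' ha) (not_lt.mpr haa.le)

end Part2

section Part3

open Sum

lemma forward {k l : ℕ} (p : PP k k) (q : PP l l)
    (hpc : isEvenNC p) (hqc : isEvenNC q)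
    (pu : PP k (tP p)) (hpu : isBuilding pu) (hpdec : p = compP (swapP pu) pu)
    (qu : PP l (tP q)) (hqu : isBuilding qu) (hqdec : q = compP (swapP qu) qu)
    (r : PP k l) (hrc : isEvenNC r) (h1 : compP (swapP r) r = p)
    (h2 : compP r (swapP r) = q) :
    ∃ h : tP p = tP q, ∀ (i : Fin (tP p)) (a : Fin k) (b : Fin l),
      pu.r (Sum.inl a) (Sum.inr i) → qu.r (Sum.inl b) (Sum.inr (Fin.cast h i)) →
      (4 ∣ Nat.card {y // p.r y (Sum.inl a)} ↔ 4 ∣ Nat.card {y // q.r y (Sum.inl b)}) := by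
  have h2' : compP (swapP (swapP r)) (swapP r) = q := by rw [swapP_swapP]; exact h2
  -- characterizations of p and q in terms of r
  have pul : ∀ a a' : Fin k, p.r (.inl a) (.inl a') ↔ r.r (.inl a) (.inl a') :=
    fun a a' => by rw [← h1]; exact comp_ul (fun _ _ => Iff.rfl) a a'
  have pcross : ∀ a a' : Fin k, p.r (.inl a) (.inr a') ↔
      ∃ c, r.r (.inl a) (.inr c) ∧ r.r (.inl a') (.inr c) :=
    fun a a' => by rw [← h1]; exact comp_cross (fun _ _ => Iff.rfl) a a'
  have pll : ∀ a a' : Fin k, p.r (.inr a) (.inr a') ↔ r.r (.inl a) (.inl a') :=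
    fun a a' => by rw [← h1]; exact comp_ll (fun _ _ => Iff.rfl) a a'
  have qul : ∀ b b' : Fin l, q.r (.inl b) (.inl b') ↔ r.r (.inr b) (.inr b') :=
    fun b b' => by rw [← h2']; exact comp_ul (fun _ _ => Iff.rfl) b b'
  have qcross : ∀ b b' : Fin l, q.r (.inl b) (.inr b') ↔
      ∃ c : Fin k, r.r (.inr b) (.inl c) ∧ r.r (.inr b') (.inl c) :=
    fun b b' => by rw [← h2']; exact comp_cross (fun _ _ => Iff.rfl) b b'
  have qll : ∀ b b' : Fin l, q.r (.inr b) (.inr b') ↔ r.r (.inr b) (.inr b') :=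
    fun b b' => by rw [← h2']; exact comp_ll (fun _ _ => Iff.rfl) b b'
  -- characterizations of p and q via their building decompositions
  have hpr : ∀ x y, p.r x y ↔ (compP (swapP pu) pu).r x y := fun x y =>
    iff_of_eq (congrArg (fun s : PP k k => s.r x y) hpdec)
  have hqr : ∀ x y, q.r x y ↔ (compP (swapP qu) qu).r x y := fun x y =>
    iff_of_eq (congrArg (fun s : PP l l => s.r x y) hqdec)
  have puul : ∀ a a' : Fin k, p.r (.inl a) (.inl a') ↔ pu.r (.inl a) (.inl a') :=
    fun a a' => (hpr _ _).trans (comp_ul (fun _ _ => Iff.rfl) a a')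
  have pucross : ∀ a a' : Fin k, p.r (.inl a) (.inr a') ↔
      ∃ i, pu.r (.inl a) (.inr i) ∧ pu.r (.inl a') (.inr i) :=
    fun a a' => (hpr _ _).trans (comp_cross (fun _ _ => Iff.rfl) a a')
  have quul : ∀ b b' : Fin l, q.r (.inl b) (.inl b') ↔ qu.r (.inl b) (.inl b') :=
    fun b b' => (hqr _ _).trans (comp_ul (fun _ _ => Iff.rfl) b b')
  have qucross : ∀ b b' : Fin l, q.r (.inl b) (.inr b') ↔
      ∃ j, qu.r (.inl b) (.inr j) ∧ qu.r (.inl b') (.inr j) :=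
    fun b b' => (hqr _ _).trans (comp_cross (fun _ _ => Iff.rfl) b b')
  have hncp : isNC (compP (swapP pu) pu) := by rw [← hpdec]; exact hpc.1
  have hncq : isNC (compP (swapP qu) qu) := by rw [← hqdec]; exact hqc.1
  -- tP p = tP q
  have hf : ∀ x y, p.r x y →
      Quotient.mk r (Sum.inl (Sum.elim id id x)) = Quotient.mk r (Sum.inl (Sum.elim id id y)) := by
    intro x y hxy
    rcases x with a | a <;> rcases y with a' | a' <;> apply Quotient.sound
    · exact (pul a a').mp hxy
    · obtain ⟨c, hc1, hc2⟩ := (pcross a a').mp hxy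
      exact r.iseqv.trans hc1 (r.iseqv.symm hc2)
    · obtain ⟨c, hc1, hc2⟩ := (pcross a' a).mp (p.iseqv.symm hxy)
      exact r.iseqv.trans hc2 (r.iseqv.symm hc1)
    · exact (pll a a').mp hxy
  have hg : ∀ x y, q.r x y →
      Quotient.mk r (Sum.inr (Sum.elim id id x)) = Quotient.mk r (Sum.inr (Sum.elim id id y)) := by
    intro x y hxy
    rcases x with b | b <;> rcases y with b' | b' <;> apply Quotient.sound
    · exact (qul b b').mp hxy
    · obtain ⟨c, hc1, hc2⟩ := (qcross b b').mp hxy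
      exact r.iseqv.trans hc1 (r.iseqv.symm hc2)
    · obtain ⟨c, hc1, hc2⟩ := (qcross b' b).mp (q.iseqv.symm hxy)
      exact r.iseqv.trans hc2 (r.iseqv.symm hc1)
    · exact (qll b b').mp hxy
  let F : Quotient p → Quotient r := Quotient.lift _ hf
  let G : Quotient q → Quotient r := Quotient.lift _ hg
  let Tr := {c : Quotient r // (∃ a : Fin k, Quotient.mk r (.inl a) = c) ∧
      ∃ b : Fin l, Quotient.mk r (.inr b) = c}
  have hFp : ∀ c : {c : Quotient p // (∃ a : Fin k, Quotient.mk p (Sum.inl a) = c) ∧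
      ∃ b : Fin k, Quotient.mk p (Sum.inr b) = c},
      ((∃ a : Fin k, Quotient.mk r (.inl a) = F c.1) ∧ ∃ b : Fin l, Quotient.mk r (.inr b) = F c.1) := by
    rintro ⟨c, ⟨a, ha⟩, ⟨b, hb⟩⟩
    subst ha
    have hab : p.r (.inl a) (.inr b) := Quotient.exact hb.symm
    obtain ⟨c0, hc0, -⟩ := (pcross a b).mp hab
    exact ⟨⟨a, rfl⟩, ⟨c0, Quotient.sound (r.iseqv.symm hc0)⟩⟩
  let Fp : {c : Quotient p // _} → Tr := fun c => ⟨F c.1, hFp c⟩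
  have hFpbij : Function.Bijective Fp := by
    constructor
    · intro x1 x2 hF
      obtain ⟨a1, ha1⟩ := x1.2.1
      obtain ⟨a2, ha2⟩ := x2.2.1
      have e1 : F x1.1 = (⟦Sum.inl a1⟧ : Quotient r) := by rw [← ha1]; exact rfl
      have e2 : F x2.1 = (⟦Sum.inl a2⟧ : Quotient r) := by rw [← ha2]; exact rfl
      have hFF : (⟦Sum.inl a1⟧ : Quotient r) = ⟦Sum.inl a2⟧ :=
        e1.symm.trans ((congrArg Subtype.val hF).trans e2)
      apply Subtype.ext
      rw [← ha1, ← ha2]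
      exact Quotient.sound ((pul a1 a2).mpr (Quotient.exact hFF))
    · rintro ⟨d, ⟨a, ha⟩, ⟨b, hb⟩⟩
      have hab : r.r (.inl a) (.inr b) := Quotient.exact (ha.trans hb.symm)
      have hthr : p.r (.inl a) (.inr a) := (pcross a a).mpr ⟨b, hab, hab⟩
      refine ⟨⟨Quotient.mk p (.inl a), ⟨a, rfl⟩, ⟨a, Quotient.sound (p.iseqv.symm hthr)⟩⟩, ?_⟩
      apply Subtype.ext
      exact ha
  have hGq : ∀ c : {c : Quotient q // (∃ a : Fin l, Quotient.mk q (Sum.inl a) = c) ∧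
      ∃ b : Fin l, Quotient.mk q (Sum.inr b) = c},
      ((∃ a : Fin k, Quotient.mk r (.inl a) = G c.1) ∧ ∃ b : Fin l, Quotient.mk r (.inr b) = G c.1) := by
    rintro ⟨c, ⟨b, hb⟩, ⟨b', hb'⟩⟩
    subst hb
    have hbb : q.r (.inl b) (.inr b') := Quotient.exact hb'.symm
    obtain ⟨c0, hc0, -⟩ := (qcross b b').mp hbb
    exact ⟨⟨c0, Quotient.sound (r.iseqv.symm hc0)⟩, ⟨b, rfl⟩⟩
  let Gq : {c : Quotient q // _} → Tr := fun c => ⟨G c.1, hGq c⟩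
  have hGqbij : Function.Bijective Gq := by
    constructor
    · intro x1 x2 hF
      obtain ⟨b1, hb1⟩ := x1.2.1
      obtain ⟨b2, hb2⟩ := x2.2.1
      have e1 : G x1.1 = (⟦Sum.inr b1⟧ : Quotient r) := by rw [← hb1]; exact rfl
      have e2 : G x2.1 = (⟦Sum.inr b2⟧ : Quotient r) := by rw [← hb2]; exact rfl
      have hFF : (⟦Sum.inr b1⟧ : Quotient r) = ⟦Sum.inr b2⟧ :=
        e1.symm.trans ((congrArg Subtype.val hF).trans e2)
      apply Subtype.ext
      rw [← hb1, ← hb2]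
      exact Quotient.sound ((qul b1 b2).mpr (Quotient.exact hFF))
    · rintro ⟨d, ⟨a, ha⟩, ⟨b, hb⟩⟩
      have hab : r.r (.inl a) (.inr b) := Quotient.exact (ha.trans hb.symm)
      have hthr : q.r (.inl b) (.inr b) := (qcross b b).mpr ⟨a, r.iseqv.symm hab, r.iseqv.symm hab⟩
      refine ⟨⟨Quotient.mk q (.inl b), ⟨b, rfl⟩, ⟨b, Quotient.sound (q.iseqv.symm hthr)⟩⟩, ?_⟩
      apply Subtype.ext
      exact hb
  have h : tP p = tP q :=
    (Nat.card_congr (Equiv.ofBijective Fp hFpbij)).trans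
      (Nat.card_congr (Equiv.ofBijective Gq hGqbij)).symm
  refine ⟨h, ?_⟩
  -- the Link relation
  set Link : Fin (tP p) → Fin (tP p) → Prop := fun i j =>
    ∃ a b, pu.r (.inl a) (.inr i) ∧ qu.r (.inl b) (.inr (Fin.cast h j)) ∧
      r.r (.inl a) (.inr b) with hLink
  have total : ∀ i, ∃ j, Link i j := by
    intro i
    obtain ⟨a, ha⟩ := hpu.2.1 i
    have hthr : p.r (.inl a) (.inr a) := (pucross a a).mpr ⟨i, ha, ha⟩
    obtain ⟨b, hb, -⟩ := (pcross a a).mp hthr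
    have hqthr : q.r (.inl b) (.inr b) :=
      (qcross b b).mpr ⟨a, r.iseqv.symm hb, r.iseqv.symm hb⟩
    obtain ⟨j', hj', -⟩ := (qucross b b).mp hqthr
    exact ⟨Fin.cast h.symm j', a, b, ha, by rwa [(Fin.ext rfl : Fin.cast h (Fin.cast h.symm j') = j')], hb⟩
  have cototal : ∀ j, ∃ i, Link i j := by
    intro j
    obtain ⟨b, hb⟩ := hqu.2.1 (Fin.cast h j)
    have hqthr : q.r (.inl b) (.inr b) := (qucross b b).mpr ⟨Fin.cast h j, hb, hb⟩
    obtain ⟨a, hab, -⟩ := (qcross b b).mp hqthr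
    have hthr : p.r (.inl a) (.inr a) :=
      (pcross a a).mpr ⟨b, r.iseqv.symm hab, r.iseqv.symm hab⟩
    obtain ⟨i, hi, -⟩ := (pucross a a).mp hthr
    exact ⟨i, a, b, hi, hb, r.iseqv.symm hab⟩
  have mono : ∀ i j i' j', Link i j → Link i' j' → i < i' → j < j' := by
    rintro i j i' j' ⟨a, b, ha, hb, hab⟩ ⟨a', b', ha', hb', hab'⟩ hii
    have haa : a < a' := building_lt hpu hncp hii ha ha'
    have hnr : ¬ r.r (.inl a) (.inl a') := by
      intro hcon
      have hpu' : pu.r (.inl a) (.inl a') := (puul a a').mp ((pul a a').mpr hcon)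
      have : pu.r (.inr i) (.inr i') :=
        pu.iseqv.trans (pu.iseqv.trans (pu.iseqv.symm ha) hpu') ha'
      exact absurd (hpu.1 i i' this) hii.ne
    have hbb : b < b' := by
      by_contra hle
      push_neg at hle
      have hne : b' ≠ b := by
        rintro rfl
        exact hnr (r.iseqv.trans hab (r.iseqv.symm hab'))
      have hb'b : b' < b := lt_of_le_of_ne hle hne
      refine hrc.1 ⟨.inl a, .inl a', .inr b, .inr b', ?_, ?_, ?_, hab, hab', hnr⟩
      · exact haa
      · show (a' : ℕ) < k + (l - 1 - (b : ℕ))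
        have := a'.isLt; omega
      · show k + (l - 1 - (b : ℕ)) < k + (l - 1 - (b' : ℕ))
        have := b.isLt; have := b'.isLt
        have : (b' : ℕ) < (b : ℕ) := hb'b
        omega
    have hnej : Fin.cast h j ≠ Fin.cast h j' := by
      intro hcon
      apply hnr
      have hb'' : qu.r (.inl b') (.inr (Fin.cast h j)) := by rw [hcon]; exact hb'
      have hqu' : qu.r (.inl b) (.inl b') :=
        qu.iseqv.trans hb (qu.iseqv.symm hb'')
      have hrbb : r.r (.inr b) (.inr b') := (qul b b').mp ((quul b b').mpr hqu')
      exact r.iseqv.trans hab (r.iseqv.trans hrbb (r.iseqv.symm hab'))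
    have hcast : Fin.cast h j < Fin.cast h j' := building_index_lt hqu hncq hb hb' hnej hbb
    rw [Fin.lt_def] at hcast ⊢
    simpa using hcast
  have mono2 : ∀ i j i' j', Link i j → Link i' j' → j < j' → i < i' := by
    rintro i j i' j' ⟨a, b, ha, hb, hab⟩ ⟨a', b', ha', hb', hab'⟩ hjj
    have hcast : Fin.cast h j < Fin.cast h j' := by
      rw [Fin.lt_def] at hjj ⊢; simpa using hjj
    have hbb : b < b' := building_lt hqu hncq hcast hb hb'
    have hnrb : ¬ r.r (.inr b) (.inr b') := by
      intro hcon
      have hqu' : qu.r (.inl b) (.inl b') := (quul b b').mp ((qul b b').mpr hcon)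
      have : qu.r (.inr (Fin.cast h j)) (.inr (Fin.cast h j')) :=
        qu.iseqv.trans (qu.iseqv.trans (qu.iseqv.symm hb) hqu') hb'
      have hvv := congrArg Fin.val (hqu.1 _ _ this)
      rw [Fin.lt_def] at hjj
      simp at hvv
      omega
    have hnr : ¬ r.r (.inl a) (.inl a') := by
      intro hcon
      exact hnrb (r.iseqv.trans (r.iseqv.symm hab) (r.iseqv.trans hcon hab'))
    have haa : a < a' := by
      by_contra hle
      push_neg at hle
      have hne : a' ≠ a := by
        rintro rfl
        exact hnr (r.iseqv.refl _)
      have ha'a : a' < a := lt_of_le_of_ne hle hne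
      refine hrc.1 ⟨.inl a', .inl a, .inr b', .inr b, ?_, ?_, ?_, hab', hab,
        fun hcon => hnr (r.iseqv.symm hcon)⟩
      · exact ha'a
      · show (a : ℕ) < k + (l - 1 - (b' : ℕ))
        have := a.isLt; omega
      · show k + (l - 1 - (b' : ℕ)) < k + (l - 1 - (b : ℕ))
        have := b.isLt; have := b'.isLt
        have : (b : ℕ) < (b' : ℕ) := hbb
        omega
    have hnei : i ≠ i' := by
      intro hcon
      apply hnr
      have hpu' : pu.r (.inl a) (.inl a') :=
        pu.iseqv.trans ha (pu.iseqv.trans (by rw [hcon]) (pu.iseqv.symm ha'))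
      exact (pul a a').mp ((puul a a').mpr hpu')
    exact building_index_lt hpu hncp ha ha' hnei haa
  have le_of_link : ∀ n : ℕ, ∀ i j, Link i j → (i : ℕ) = n → (i : ℕ) ≤ (j : ℕ) := by
    intro n
    induction n with
    | zero => intro i j _ h0; omega
    | succ m ih =>
      intro i j hL hv
      have hm : m < tP p := by have := i.isLt; omega
      obtain ⟨j', hL'⟩ := total ⟨m, hm⟩
      have hmv : (⟨m, hm⟩ : Fin (tP p)).val = m := rfl
      have hj' : j' < j := mono _ _ _ _ hL' hL (by rw [Fin.lt_def]; omega)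
      have := ih ⟨m, hm⟩ j' hL' rfl
      rw [Fin.lt_def] at hj'
      omega
  have ge_of_link : ∀ n : ℕ, ∀ i j, Link i j → (j : ℕ) = n → (j : ℕ) ≤ (i : ℕ) := by
    intro n
    induction n with
    | zero => intro i j _ h0; omega
    | succ m ih =>
      intro i j hL hv
      have hm : m < tP p := by have := j.isLt; omega
      obtain ⟨i', hL'⟩ := cototal ⟨m, hm⟩
      have hmv : (⟨m, hm⟩ : Fin (tP p)).val = m := rfl
      have hi' : i' < i := mono2 _ _ _ _ hL' hL (by rw [Fin.lt_def]; omega)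
      have := ih i' ⟨m, hm⟩ hL' rfl
      rw [Fin.lt_def] at hi'
      omega
  have eq_of_link : ∀ i j, Link i j → i = j := by
    intro i j hL
    exact Fin.ext (le_antisymm (le_of_link _ i j hL rfl) (ge_of_link _ i j hL rfl))
  -- main conclusion
  intro i a b ha hb
  obtain ⟨j, hLij⟩ := total i
  obtain rfl := (eq_of_link i j hLij).symm
  obtain ⟨a0, b0, ha0, hb0, hr0⟩ := hLij
  have hra : r.r (.inl a) (.inl a0) :=
    (pul a a0).mp ((puul a a0).mpr (pu.iseqv.trans ha (pu.iseqv.symm ha0)))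
  have hrb : r.r (.inr b) (.inr b0) :=
    (qul b b0).mp ((quul b b0).mpr (qu.iseqv.trans hb (qu.iseqv.symm hb0)))
  have hrab : r.r (.inl a) (.inr b) :=
    r.iseqv.trans hra (r.iseqv.trans hr0 (r.iseqv.symm hrb))
  -- card computations
  have cardp : Nat.card {y // p.r y (.inl a)} =
      Nat.card {x : Fin k // r.r (.inl a) (.inl x)} +
        Nat.card {x : Fin k // r.r (.inl a) (.inl x)} := by
    rw [card_flip, card_split]
    congr 1
    · exact Nat.card_congr (Equiv.subtypeEquivRight fun x => pul a x)
    · refine Nat.card_congr (Equiv.subtypeEquivRight fun x => ?_)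
      constructor
      · intro hx
        obtain ⟨c, hc1, hc2⟩ := (pcross a x).mp hx
        exact r.iseqv.trans hc1 (r.iseqv.symm hc2)
      · intro hx
        exact (pcross a x).mpr ⟨b, hrab, r.iseqv.trans (r.iseqv.symm hx) hrab⟩
  have cardq : Nat.card {y // q.r y (.inl b)} =
      Nat.card {y : Fin l // r.r (.inr b) (.inr y)} +
        Nat.card {y : Fin l // r.r (.inr b) (.inr y)} := by
    rw [card_flip, card_split]
    congr 1
    · exact Nat.card_congr (Equiv.subtypeEquivRight fun y => qul b y)
    · refine Nat.card_congr (Equiv.subtypeEquivRight fun y => ?_)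
      constructor
      · intro hy
        obtain ⟨c, hc1, hc2⟩ := (qcross b y).mp hy
        exact r.iseqv.trans hc1 (r.iseqv.symm hc2)
      · intro hy
        exact (qcross b y).mpr ⟨a, r.iseqv.symm hrab,
          r.iseqv.trans (r.iseqv.symm hy) (r.iseqv.symm hrab)⟩
  have cardr : Nat.card {y // r.r (.inl a) y} =
      Nat.card {x : Fin k // r.r (.inl a) (.inl x)} +
        Nat.card {c : Fin l // r.r (.inl a) (.inr c)} := card_split r (.inl a)
  have hDV : Nat.card {c : Fin l // r.r (.inl a) (.inr c)} =
      Nat.card {y : Fin l // r.r (.inr b) (.inr y)} := by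
    refine Nat.card_congr (Equiv.subtypeEquivRight fun c => ?_)
    exact ⟨fun hc => r.iseqv.trans (r.iseqv.symm hrab) hc,
      fun hc => r.iseqv.trans hrab hc⟩
  have heven : Even (Nat.card {x : Fin k // r.r (.inl a) (.inl x)} +
      Nat.card {y : Fin l // r.r (.inr b) (.inr y)}) := by
    rw [← hDV, ← cardr]
    exact hrc.2 (.inl a)
  rw [cardp, cardq]
  obtain ⟨w, hw⟩ := heven
  omega

end Part3

section Part4

open Sum

lemma backward {k l : ℕ} (p : PP k k) (q : PP l l)
    (hpc : isEvenNC p) (hqc : isEvenNC q)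
    (pu : PP k (tP p)) (hpu : isBuilding pu) (hpdec : p = compP (swapP pu) pu)
    (qu : PP l (tP q)) (hqu : isBuilding qu) (hqdec : q = compP (swapP qu) qu)
    (h : tP p = tP q)
    (W : ∀ (i : Fin (tP p)) (a : Fin k) (b : Fin l),
      pu.r (Sum.inl a) (Sum.inr i) → qu.r (Sum.inl b) (Sum.inr (Fin.cast h i)) →
      (4 ∣ Nat.card {y // p.r y (Sum.inl a)} ↔ 4 ∣ Nat.card {y // q.r y (Sum.inl b)})) :
    ∃ r : PP k l, isEvenNC r ∧ compP (swapP r) r = p ∧ compP r (swapP r) = q := by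
  classical
  set quc : PP l (tP p) := Setoid.comap (Sum.map id (Fin.cast h)) qu with hquc
  have hq1 : ∀ i i' : Fin (tP p), quc.r (.inr i) (.inr i') → i = i' := by
    intro i i' hh
    have := hqu.1 _ _ hh
    exact Fin.ext (by simpa using congrArg Fin.val this)
  have hE : ∀ c c', pu.r (.inr c) (.inr c') ↔ quc.r (.inr c) (.inr c') := by
    intro c c'
    constructor
    · intro hcc; obtain rfl := hpu.1 _ _ hcc; exact quc.iseqv.refl _
    · intro hcc; obtain rfl := hq1 _ _ hcc; exact pu.iseqv.refl _
  set r : PP k l := compP (swapP quc) pu with hr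
  have rul : ∀ (a a' : Fin k), r.r (.inl a) (.inl a') ↔ pu.r (.inl a) (.inl a') :=
    comp_ul hE
  have rcross : ∀ (a : Fin k) (b : Fin l), r.r (.inl a) (.inr b) ↔
      ∃ i, pu.r (.inl a) (.inr i) ∧ quc.r (.inl b) (.inr i) := comp_cross hE
  have rll : ∀ (b b' : Fin l), r.r (.inr b) (.inr b') ↔ quc.r (.inl b) (.inl b') :=
    comp_ll hE
  -- characterizations of p and q
  have hpr : ∀ x y, p.r x y ↔ (compP (swapP pu) pu).r x y := fun x y =>
    iff_of_eq (congrArg (fun s : PP k k => s.r x y) hpdec)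
  have hqr : ∀ x y, q.r x y ↔ (compP (swapP qu) qu).r x y := fun x y =>
    iff_of_eq (congrArg (fun s : PP l l => s.r x y) hqdec)
  have puul : ∀ a a' : Fin k, p.r (.inl a) (.inl a') ↔ pu.r (.inl a) (.inl a') :=
    fun a a' => (hpr _ _).trans (comp_ul (fun _ _ => Iff.rfl) a a')
  have pucross : ∀ a a' : Fin k, p.r (.inl a) (.inr a') ↔
      ∃ i, pu.r (.inl a) (.inr i) ∧ pu.r (.inl a') (.inr i) :=
    fun a a' => (hpr _ _).trans (comp_cross (fun _ _ => Iff.rfl) a a')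
  have pull : ∀ a a' : Fin k, p.r (.inr a) (.inr a') ↔ pu.r (.inl a) (.inl a') :=
    fun a a' => (hpr _ _).trans (comp_ll (fun _ _ => Iff.rfl) a a')
  have quul : ∀ b b' : Fin l, q.r (.inl b) (.inl b') ↔ qu.r (.inl b) (.inl b') :=
    fun b b' => (hqr _ _).trans (comp_ul (fun _ _ => Iff.rfl) b b')
  have qucross : ∀ b b' : Fin l, q.r (.inl b) (.inr b') ↔
      ∃ j, qu.r (.inl b) (.inr j) ∧ qu.r (.inl b') (.inr j) :=
    fun b b' => (hqr _ _).trans (comp_cross (fun _ _ => Iff.rfl) b b')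
  have qull : ∀ b b' : Fin l, q.r (.inr b) (.inr b') ↔ qu.r (.inl b) (.inl b') :=
    fun b b' => (hqr _ _).trans (comp_ll (fun _ _ => Iff.rfl) b b')
  have hncp : isNC (compP (swapP pu) pu) := by rw [← hpdec]; exact hpc.1
  have hncq : isNC (compP (swapP qu) qu) := by rw [← hqdec]; exact hqc.1
  -- goal 1 : r* r = p
  have goal1 : compP (swapP r) r = p := by
    apply Setoid.ext
    have crossIff : ∀ (a a' : Fin k),
        (compP (swapP r) r).r (.inl a) (.inr a') ↔ p.r (.inl a) (.inr a') := by
      intro a a'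
      rw [comp_cross (fun _ _ => Iff.rfl) a a']
      constructor
      · rintro ⟨c, hc1, hc2⟩
        obtain ⟨i, hai, hci⟩ := (rcross a c).mp hc1
        obtain ⟨i', hai', hci'⟩ := (rcross a' c).mp hc2
        obtain rfl := hq1 i i' (quc.iseqv.trans (quc.iseqv.symm hci) hci')
        exact (pucross a a').mpr ⟨i, hai, hai'⟩
      · intro hp
        obtain ⟨i, hai, ha'i⟩ := (pucross a a').mp hp
        obtain ⟨b0, hb0⟩ := hqu.2.1 (Fin.cast h i)
        have hb0' : quc.r (.inl b0) (.inr i) := hb0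
        exact ⟨b0, (rcross a b0).mpr ⟨i, hai, hb0'⟩, (rcross a' b0).mpr ⟨i, ha'i, hb0'⟩⟩
    intro x y
    rcases x with a | a <;> rcases y with a' | a'
    · rw [comp_ul (fun _ _ => Iff.rfl) a a', rul a a', puul a a']
    · exact crossIff a a'
    · constructor
      · intro hh
        exact p.iseqv.symm ((crossIff a' a).mp ((compP (swapP r) r).iseqv.symm hh))
      · intro hh
        exact (compP (swapP r) r).iseqv.symm ((crossIff a' a).mpr (p.iseqv.symm hh))
    · rw [comp_ll (fun _ _ => Iff.rfl) a a', rul a a', pull a a']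
  -- goal 2 : r r* = q
  have goal2 : compP r (swapP r) = q := by
    have e : compP r (swapP r) = compP (swapP (swapP r)) (swapP r) := by
      rw [swapP_swapP]
    rw [e]
    apply Setoid.ext
    have crossIff : ∀ (b b' : Fin l),
        (compP (swapP (swapP r)) (swapP r)).r (.inl b) (.inr b') ↔ q.r (.inl b) (.inr b') := by
      intro b b'
      rw [comp_cross (fun _ _ => Iff.rfl) b b']
      constructor
      · rintro ⟨c, hc1, hc2⟩
        have hc1' : r.r (.inl c) (.inr b) := r.iseqv.symm hc1
        have hc2' : r.r (.inl c) (.inr b') := r.iseqv.symm hc2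
        obtain ⟨i, hci, hbi⟩ := (rcross c b).mp hc1'
        obtain ⟨i', hci', hb'i'⟩ := (rcross c b').mp hc2'
        obtain rfl := hpu.1 i i' (pu.iseqv.trans (pu.iseqv.symm hci) hci')
        exact (qucross b b').mpr ⟨Fin.cast h i, hbi, hb'i'⟩
      · intro hq
        obtain ⟨j, hbj, hb'j⟩ := (qucross b b').mp hq
        have ecast : Fin.cast h (Fin.cast h.symm j) = j := Fin.ext rfl
        have hbj' : quc.r (.inl b) (.inr (Fin.cast h.symm j)) := by
          show qu.r (.inl b) (.inr (Fin.cast h (Fin.cast h.symm j)))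
          rw [ecast]; exact hbj
        have hb'j' : quc.r (.inl b') (.inr (Fin.cast h.symm j)) := by
          show qu.r (.inl b') (.inr (Fin.cast h (Fin.cast h.symm j)))
          rw [ecast]; exact hb'j
        obtain ⟨a0, ha0⟩ := hpu.2.1 (Fin.cast h.symm j)
        refine ⟨a0, ?_, ?_⟩
        · exact r.iseqv.symm ((rcross a0 b).mpr ⟨Fin.cast h.symm j, ha0, hbj'⟩)
        · exact r.iseqv.symm ((rcross a0 b').mpr ⟨Fin.cast h.symm j, ha0, hb'j'⟩)
    intro x y
    rcases x with b | b <;> rcases y with b' | b'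
    · rw [comp_ul (fun _ _ => Iff.rfl) b b']
      exact (rll b b').trans (quul b b').symm
    · exact crossIff b b'
    · constructor
      · intro hh
        exact q.iseqv.symm ((crossIff b' b).mp
          ((compP (swapP (swapP r)) (swapP r)).iseqv.symm hh))
      · intro hh
        exact (compP (swapP (swapP r)) (swapP r)).iseqv.symm
          ((crossIff b' b).mpr (q.iseqv.symm hh))
    · rw [comp_ll (fun _ _ => Iff.rfl) b b']
      exact (rll b b').trans (qull b b').symm
  -- block size computations
  have cardP : ∀ (a : Fin k) (i : Fin (tP p)), pu.r (.inl a) (.inr i) →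
      Nat.card {y // p.r y (.inl a)} =
        Nat.card {x : Fin k // pu.r (.inl a) (.inl x)} +
          Nat.card {x : Fin k // pu.r (.inl a) (.inl x)} := by
    intro a i hi
    rw [card_flip, card_split]
    congr 1
    · exact Nat.card_congr (Equiv.subtypeEquivRight fun x => puul a x)
    · refine Nat.card_congr (Equiv.subtypeEquivRight fun x => ?_)
      constructor
      · intro hx
        obtain ⟨i', hai', hxi'⟩ := (pucross a x).mp hx
        exact pu.iseqv.trans hai' (pu.iseqv.symm hxi')
      · intro hx
        exact (pucross a x).mpr ⟨i, hi, pu.iseqv.trans (pu.iseqv.symm hx) hi⟩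
  have cardQ : ∀ (b : Fin l) (i : Fin (tP p)), quc.r (.inl b) (.inr i) →
      Nat.card {y // q.r y (.inl b)} =
        Nat.card {x : Fin l // qu.r (.inl b) (.inl x)} +
          Nat.card {x : Fin l // qu.r (.inl b) (.inl x)} := by
    intro b i hi
    rw [card_flip, card_split]
    congr 1
    · exact Nat.card_congr (Equiv.subtypeEquivRight fun x => quul b x)
    · refine Nat.card_congr (Equiv.subtypeEquivRight fun x => ?_)
      constructor
      · intro hx
        obtain ⟨j', hbj', hxj'⟩ := (qucross b x).mp hx
        exact qu.iseqv.trans hbj' (qu.iseqv.symm hxj')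
      · intro hx
        exact (qucross b x).mpr ⟨Fin.cast h i, hi, qu.iseqv.trans (qu.iseqv.symm hx) hi⟩
  -- evenness of r
  have heven : ∀ x, Even (Nat.card {y // r.r x y}) := by
    intro x
    rcases x with a | b
    · by_cases hidx : ∃ i, pu.r (.inl a) (.inr i)
      · obtain ⟨i, hi⟩ := hidx
        obtain ⟨b0, hb0⟩ := hqu.2.1 (Fin.cast h i)
        have hb0' : quc.r (.inl b0) (.inr i) := hb0
        have hW := W i a b0 hi hb0
        rw [cardP a i hi, cardQ b0 i hb0'] at hW
        rw [card_split]
        have e1 : Nat.card {x : Fin k // r.r (.inl a) (.inl x)} =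
            Nat.card {x : Fin k // pu.r (.inl a) (.inl x)} :=
          Nat.card_congr (Equiv.subtypeEquivRight fun x => rul a x)
        have e2 : Nat.card {b : Fin l // r.r (.inl a) (.inr b)} =
            Nat.card {x : Fin l // qu.r (.inl b0) (.inl x)} := by
          refine Nat.card_congr (Equiv.subtypeEquivRight fun b => ?_)
          constructor
          · intro hb
            obtain ⟨i', hai', hbi'⟩ := (rcross a b).mp hb
            obtain rfl := hpu.1 i' i (pu.iseqv.trans (pu.iseqv.symm hai') hi)
            exact qu.iseqv.trans hb0 (qu.iseqv.symm hbi')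
          · intro hb
            refine (rcross a b).mpr ⟨i, hi, ?_⟩
            show qu.r (.inl b) (.inr (Fin.cast h i))
            exact qu.iseqv.trans (qu.iseqv.symm hb) hb0
        rw [e1, e2, Nat.even_iff]
        rcases hW with ⟨hWl, hWr⟩
        omega
      · push_neg at hidx
        rw [card_split]
        have e1 : Nat.card {x : Fin k // r.r (.inl a) (.inl x)} =
            Nat.card {x : Fin k // p.r (.inl a) (.inl x)} :=
          Nat.card_congr (Equiv.subtypeEquivRight fun x => (rul a x).trans (puul a x).symm)
        have e2 : Nat.card {b : Fin l // r.r (.inl a) (.inr b)} = 0 := by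
          have : IsEmpty {b : Fin l // r.r (.inl a) (.inr b)} := by
            refine ⟨fun bb => ?_⟩
            obtain ⟨i', hai', -⟩ := (rcross a bb.1).mp bb.2
            exact hidx i' hai'
          exact Nat.card_of_isEmpty
        have hp := hpc.2 (.inl a)
        rw [card_split] at hp
        have e3 : Nat.card {b : Fin k // p.r (.inl a) (.inr b)} = 0 := by
          have : IsEmpty {b : Fin k // p.r (.inl a) (.inr b)} := by
            refine ⟨fun bb => ?_⟩
            obtain ⟨i', hai', -⟩ := (pucross a bb.1).mp bb.2
            exact hidx i' hai'
          exact Nat.card_of_isEmpty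
        rw [e1, e2]
        rw [e3] at hp
        exact hp
    · by_cases hidx : ∃ i, quc.r (.inl b) (.inr i)
      · obtain ⟨i, hi⟩ := hidx
        obtain ⟨a0, ha0⟩ := hpu.2.1 i
        have hW := W i a0 b ha0 hi
        rw [cardP a0 i ha0, cardQ b i hi] at hW
        rw [card_split]
        have e1 : Nat.card {x : Fin k // r.r (.inr b) (.inl x)} =
            Nat.card {x : Fin k // pu.r (.inl a0) (.inl x)} := by
          refine Nat.card_congr (Equiv.subtypeEquivRight fun x => ?_)
          constructor
          · intro hx
            obtain ⟨i', hxi', hbi'⟩ := (rcross x b).mp (r.iseqv.symm hx)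
            obtain rfl := hq1 i' i (quc.iseqv.trans (quc.iseqv.symm hbi') hi)
            exact pu.iseqv.trans ha0 (pu.iseqv.symm hxi')
          · intro hx
            exact r.iseqv.symm ((rcross x b).mpr
              ⟨i, pu.iseqv.trans (pu.iseqv.symm hx) ha0, hi⟩)
        have e2 : Nat.card {y : Fin l // r.r (.inr b) (.inr y)} =
            Nat.card {x : Fin l // qu.r (.inl b) (.inl x)} :=
          Nat.card_congr (Equiv.subtypeEquivRight fun y => rll b y)
        rw [e1, e2, Nat.even_iff]
        rcases hW with ⟨hWl, hWr⟩
        omega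
      · push_neg at hidx
        rw [card_split]
        have e1 : Nat.card {x : Fin k // r.r (.inr b) (.inl x)} = 0 := by
          have : IsEmpty {x : Fin k // r.r (.inr b) (.inl x)} := by
            refine ⟨fun xx => ?_⟩
            obtain ⟨i', -, hbi'⟩ := (rcross xx.1 b).mp (r.iseqv.symm xx.2)
            exact hidx i' hbi'
          exact Nat.card_of_isEmpty
        have e2 : Nat.card {y : Fin l // r.r (.inr b) (.inr y)} =
            Nat.card {y : Fin l // q.r (.inl b) (.inl y)} :=
          Nat.card_congr (Equiv.subtypeEquivRight fun y => (rll b y).trans (quul b y).symm)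
        have hq := hqc.2 (.inl b)
        rw [card_split] at hq
        have e3 : Nat.card {y : Fin l // q.r (.inl b) (.inr y)} = 0 := by
          have : IsEmpty {y : Fin l // q.r (.inl b) (.inr y)} := by
            refine ⟨fun yy => ?_⟩
            obtain ⟨j', hbj', -⟩ := (qucross b yy.1).mp yy.2
            refine hidx (Fin.cast h.symm j') ?_
            show qu.r (.inl b) (.inr (Fin.cast h (Fin.cast h.symm j')))
            rw [(Fin.ext rfl : Fin.cast h (Fin.cast h.symm j') = j')]
            exact hbj'
          exact Nat.card_of_isEmpty
        rw [e1, e2]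
        rw [e3] at hq
        simpa using hq
  -- noncrossing property of r
  have hnc : isNC r := by
    rintro ⟨x1, x2, x3, x4, o12, o23, o34, r13, r24, n12⟩
    rcases x1 with a1 | b1 <;> rcases x2 with a2 | b2 <;>
      rcases x3 with a3 | b3 <;> rcases x4 with a4 | b4
    -- LLLL
    · refine hpc.1 ⟨.inl a1, .inl a2, .inl a3, .inl a4, o12, o23, o34, ?_, ?_, ?_⟩
      · exact (puul a1 a3).mpr ((rul a1 a3).mp r13)
      · exact (puul a2 a4).mpr ((rul a2 a4).mp r24)
      · exact fun hcon => n12 ((rul a1 a2).mpr ((puul a1 a2).mp hcon))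
    -- LLLR
    · obtain ⟨i2, hi2, -⟩ := (rcross a2 b4).mp r24
      refine hpc.1 ⟨.inl a1, .inl a2, .inl a3, .inr a2, o12, o23, ?_, ?_, ?_, ?_⟩
      · show (a3 : ℕ) < k + (k - 1 - (a2 : ℕ))
        have := a3.isLt; omega
      · exact (puul a1 a3).mpr ((rul a1 a3).mp r13)
      · exact (pucross a2 a2).mpr ⟨i2, hi2, hi2⟩
      · exact fun hcon => n12 ((rul a1 a2).mpr ((puul a1 a2).mp hcon))
    -- LLRL impossible: o34 : pos(inr b3) < pos(inl a4)
    · exfalso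
      have h34 : k + (l - 1 - (b3 : ℕ)) < (a4 : ℕ) := o34
      have := a4.isLt; omega
    -- LLRR
    · obtain ⟨i1, h1a, h1b⟩ := (rcross a1 b3).mp r13
      obtain ⟨i2, h2a, h2b⟩ := (rcross a2 b4).mp r24
      have hne : i1 ≠ i2 := by
        rintro rfl
        exact n12 ((rul a1 a2).mpr (pu.iseqv.trans h1a (pu.iseqv.symm h2a)))
      have h12 : i1 < i2 := building_index_lt hpu hncp h1a h2a hne o12
      have hcast : Fin.cast h i1 < Fin.cast h i2 := h12
      have hbb : b3 < b4 := building_lt hqu hncq hcast h1b h2b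
      have h34 : k + (l - 1 - (b3 : ℕ)) < k + (l - 1 - (b4 : ℕ)) := o34
      have hb3 := b3.isLt; have hb4 := b4.isLt
      have : (b3 : ℕ) < (b4 : ℕ) := hbb
      omega
    -- LRLL impossible
    · exfalso
      have h23 : k + (l - 1 - (b2 : ℕ)) < (a3 : ℕ) := o23
      have := a3.isLt; omega
    -- LRLR impossible
    · exfalso
      have h23 : k + (l - 1 - (b2 : ℕ)) < (a3 : ℕ) := o23
      have := a3.isLt; omega
    -- LRRL impossible
    · exfalso
      have h34 : k + (l - 1 - (b3 : ℕ)) < (a4 : ℕ) := o34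
      have := a4.isLt; omega
    -- LRRR
    · obtain ⟨i, hai, hb3i⟩ := (rcross a1 b3).mp r13
      have q24 : q.r (.inl b2) (.inl b4) := (quul b2 b4).mpr ((rll b2 b4).mp r24)
      have qthr : q.r (.inl b3) (.inr b3) := (qucross b3 b3).mpr ⟨Fin.cast h i, hb3i, hb3i⟩
      have h23 : (a1 : ℕ) < k + (l - 1 - (b2 : ℕ)) := o12
      have o23' : k + (l - 1 - (b2 : ℕ)) < k + (l - 1 - (b3 : ℕ)) := o23
      have o34' : k + (l - 1 - (b3 : ℕ)) < k + (l - 1 - (b4 : ℕ)) := o34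
      have hb2 := b2.isLt; have hb3 := b3.isLt; have hb4 := b4.isLt
      refine hqc.1 ⟨.inl b4, .inl b3, .inl b2, .inr b3, ?_, ?_, ?_, ?_, ?_, ?_⟩
      · show (b4 : ℕ) < (b3 : ℕ); omega
      · show (b3 : ℕ) < (b2 : ℕ); omega
      · show (b2 : ℕ) < l + (l - 1 - (b3 : ℕ)); omega
      · exact q.iseqv.symm q24
      · exact qthr
      · intro hcon
        have : r.r (.inr b4) (.inr b3) := (rll b4 b3).mpr ((quul b4 b3).mp hcon)
        exact n12 (r.iseqv.trans r13 (r.iseqv.trans (r.iseqv.symm this)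
          (r.iseqv.symm r24)))
    -- RLLL .. RLRR impossible (x1 = inr, x2 = inl)
    · exfalso
      have h12 : k + (l - 1 - (b1 : ℕ)) < (a2 : ℕ) := o12
      have := a2.isLt; omega
    · exfalso
      have h12 : k + (l - 1 - (b1 : ℕ)) < (a2 : ℕ) := o12
      have := a2.isLt; omega
    · exfalso
      have h12 : k + (l - 1 - (b1 : ℕ)) < (a2 : ℕ) := o12
      have := a2.isLt; omega
    · exfalso
      have h12 : k + (l - 1 - (b1 : ℕ)) < (a2 : ℕ) := o12
      have := a2.isLt; omega
    -- RRLL, RRLR impossible (x3 = inl after x2 = inr)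
    · exfalso
      have h23 : k + (l - 1 - (b2 : ℕ)) < (a3 : ℕ) := o23
      have := a3.isLt; omega
    · exfalso
      have h23 : k + (l - 1 - (b2 : ℕ)) < (a3 : ℕ) := o23
      have := a3.isLt; omega
    -- RRRL impossible
    · exfalso
      have h34 : k + (l - 1 - (b3 : ℕ)) < (a4 : ℕ) := o34
      have := a4.isLt; omega
    -- RRRR
    · have q13 : q.r (.inl b1) (.inl b3) := (quul b1 b3).mpr ((rll b1 b3).mp r13)
      have q24 : q.r (.inl b2) (.inl b4) := (quul b2 b4).mpr ((rll b2 b4).mp r24)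
      have o12' : k + (l - 1 - (b1 : ℕ)) < k + (l - 1 - (b2 : ℕ)) := o12
      have o23' : k + (l - 1 - (b2 : ℕ)) < k + (l - 1 - (b3 : ℕ)) := o23
      have o34' : k + (l - 1 - (b3 : ℕ)) < k + (l - 1 - (b4 : ℕ)) := o34
      have hb1 := b1.isLt; have hb2 := b2.isLt
      have hb3 := b3.isLt; have hb4 := b4.isLt
      refine hqc.1 ⟨.inl b4, .inl b3, .inl b2, .inl b1, ?_, ?_, ?_, ?_, ?_, ?_⟩
      · show (b4 : ℕ) < (b3 : ℕ); omega
      · show (b3 : ℕ) < (b2 : ℕ); omega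
      · show (b2 : ℕ) < (b1 : ℕ); omega
      · exact q.iseqv.symm q24
      · exact q.iseqv.symm q13
      · intro hcon
        have : r.r (.inr b4) (.inr b3) := (rll b4 b3).mpr ((quul b4 b3).mp hcon)
        exact n12 (r.iseqv.trans r13 (r.iseqv.trans (r.iseqv.symm this)
          (r.iseqv.symm r24)))
  exact ⟨r, ⟨hnc, heven⟩, goal1, goal2⟩

end Part4



/-- in the category `⟨⊞⟩` of noncrossing partitions with blocks of even
size, two projective partitions are equivalent iff they have the same word `w(p)` over
`ℤ/2`, i.e. the same number of through-blocks and, for each `i`, the `i`-th through-block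
(read left to right, as recorded by the building partition of the through-block
decomposition) of `p` has size divisible by 4 exactly when that of `q` does. -/
theorem evenNC_equivalence_iff_word {k l : ℕ} (p : PP k k) (q : PP l l)
    (hp : isProjective p) (hq : isProjective q) (hpc : isEvenNC p) (hqc : isEvenNC q)
    (pu : PP k (tP p)) (hpu : isBuilding pu) (hpdec : p = compP (swapP pu) pu)
    (qu : PP l (tP q)) (hqu : isBuilding qu) (hqdec : q = compP (swapP qu) qu) :
    (∃ r : PP k l, isEvenNC r ∧ compP (swapP r) r = p ∧ compP r (swapP r) = q) ↔
      ∃ h : tP p = tP q, ∀ (i : Fin (tP p)) (a : Fin k) (b : Fin l),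
        pu.r (Sum.inl a) (Sum.inr i) → qu.r (Sum.inl b) (Sum.inr (Fin.cast h i)) →
        (4 ∣ Nat.card {y // p.r y (Sum.inl a)} ↔ 4 ∣ Nat.card {y // q.r y (Sum.inl b)}) := by
  constructor
  · rintro ⟨r, hrc, h1, h2⟩
    exact forward p q hpc hqc pu hpu hpdec qu hqu hqdec r hrc h1 h2
  · rintro ⟨h, W⟩
    exact backward p q hpc hqc pu hpu hpdec qu hqu hqdec h W
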